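/- Let $(X,d)$ and $(Y,\rho)$ be metric spaces, $s>0$, and let $f\colon X\to Y$ be Lipschitz. Suppose $x\in X$ and $0<\lambda_x\le 1$ satisfy $\limsup_{r\to 0} \mathcal{H}^s\big(B(f(x),\lambda_x r)\setminus f(B(x,r))\big)/(2\lambda_x r)^s < \tfrac12\,\Theta^s_*(Y,f(x))$. Then for every $0<\lambda\le\lambda_x$ the same inequality holds with $\lambda$ in place of $\lambda_x$: $\limsup_{r\to 0} \mathcal{H}^s\big(B(f(x),\lambda r)\setminus f(B(x,r))\big)/(2\lambda r)^s < \tfrac12\,\Theta^s_*(Y,f(x))$. -/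

import Mathlib

open MeasureTheory Metric Filter Set
open scoped ENNReal Topology NNReal

/-- If the David-type limsup inequality holds at `x` for some `0 < lx ≤ 1`, then it
also holds for every `0 < l ≤ lx`. -/
theorem david_condition_mono
    {X Y : Type*} [MetricSpace X] [MeasurableSpace X] [BorelSpace X]
    [MetricSpace Y] [MeasurableSpace Y] [BorelSpace Y]
    {s : ℝ} (hs : 0 < s) (f : X → Y)
    (hlip : ∃ L : ℝ≥0, LipschitzWith L f)
    (x : X) {lx : ℝ} (hlx0 : 0 < lx) (hlx1 : lx ≤ 1)
    (hmain : Filter.limsup (fun r : ℝ =>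
        μH[s] (closedBall (f x) (lx * r) \ f '' closedBall x r)
          / ENNReal.ofReal ((2 * lx * r) ^ s)) (𝓝[>] (0 : ℝ))
      < (1 / 2) * Filter.liminf (fun r : ℝ =>
          μH[s] (closedBall (f x) r) / ENNReal.ofReal ((2 * r) ^ s)) (𝓝[>] (0 : ℝ))) :
    ∀ l : ℝ, 0 < l → l ≤ lx →
      Filter.limsup (fun r : ℝ =>
          μH[s] (closedBall (f x) (l * r) \ f '' closedBall x r)
            / ENNReal.ofReal ((2 * l * r) ^ s)) (𝓝[>] (0 : ℝ))
        < (1 / 2) * Filter.liminf (fun r : ℝ =>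
            μH[s] (closedBall (f x) r) / ENNReal.ofReal ((2 * r) ^ s)) (𝓝[>] (0 : ℝ)) := by
  intro l hl0 hl1
  set c : ℝ := l / lx with hc
  have hc0 : 0 < c := div_pos hl0 hlx0
  have hc1 : c ≤ 1 := (div_le_one hlx0).2 hl1
  set g : ℝ → ℝ≥0∞ := fun r =>
    μH[s] (closedBall (f x) (lx * r) \ f '' closedBall x r)
      / ENNReal.ofReal ((2 * lx * r) ^ s) with hg
  have key : Filter.limsup (fun r : ℝ =>
      μH[s] (closedBall (f x) (l * r) \ f '' closedBall x r)
        / ENNReal.ofReal ((2 * l * r) ^ s)) (𝓝[>] (0 : ℝ))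
      ≤ Filter.limsup g (𝓝[>] (0 : ℝ)) := by
    have hmap : Filter.map (fun r : ℝ => c * r) (𝓝[>] (0 : ℝ)) = 𝓝[>] (0 : ℝ) := by
      have hsurj : Function.Surjective (fun r : ℝ => c * r) :=
        fun y => ⟨y / c, mul_div_cancel₀ y hc0.ne'⟩
      have h := Filter.map_comap_of_surjective hsurj (𝓝[>] (0 : ℝ))
      rwa [comap_mulLeft_nhdsGT_zero hc0] at h
    have hle : ∀ᶠ r in 𝓝[>] (0 : ℝ),
        μH[s] (closedBall (f x) (l * r) \ f '' closedBall x r)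
          / ENNReal.ofReal ((2 * l * r) ^ s) ≤ g (c * r) := by
      filter_upwards [self_mem_nhdsWithin] with r hr
      have hr0 : (0 : ℝ) < r := hr
      have heq : lx * (c * r) = l * r := by rw [hc, ← mul_assoc, mul_div_cancel₀ l hlx0.ne']
      have heq2 : 2 * lx * (c * r) = 2 * l * r := by rw [mul_assoc, heq]; ring
      have hsub : closedBall (f x) (l * r) \ f '' closedBall x r
          ⊆ closedBall (f x) (lx * (c * r)) \ f '' closedBall x (c * r) := by
        rw [heq]
        refine diff_subset_diff_right (Set.image_mono ?_)
        exact closedBall_subset_closedBall (by nlinarith)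
      simp only [hg, heq2]
      exact ENNReal.div_le_div_right (measure_mono hsub) _
    calc Filter.limsup (fun r : ℝ =>
          μH[s] (closedBall (f x) (l * r) \ f '' closedBall x r)
            / ENNReal.ofReal ((2 * l * r) ^ s)) (𝓝[>] (0 : ℝ))
        ≤ Filter.limsup (fun r => g (c * r)) (𝓝[>] (0 : ℝ)) :=
          Filter.limsup_le_limsup hle
      _ = Filter.limsup g (Filter.map (fun r : ℝ => c * r) (𝓝[>] (0 : ℝ))) :=
          (Filter.limsup_comp g (fun r : ℝ => c * r) _)
      _ = Filter.limsup g (𝓝[>] (0 : ℝ)) := by rw [hmap]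
  exact lt_of_le_of_lt key hmain
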